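/- For a normal contraction $Q$ on $L^2(\pi)$ and $f \in L^2_0(\pi)$ with spectral measure $\rho_f$ on the closed unit disk $D$, the condition $\int_D |1-z|^{-1}\rho_f(dz) < \infty$ holds if and only if $\sum_{k=1}^\infty k^{-2}\|\mathbb{E}(S_k\mid\mathcal{F}_0)\|_2^2 < \infty$, where $\|\mathbb{E}(S_k\mid\mathcal{F}_0)\|_2^2 = \|\sum_{j=1}^{k} Q^j f\|_{L^2(\pi)}^2 = \int_D |z + \cdots + z^k|^2 \rho_f(dz)$. -/

import Mathlib

open MeasureTheory Filter
open scoped NNReal ENNReal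

section Aux

private lemma stmt15_Sbound (n : ℕ) (z : ℂ) (hz : ‖z‖ ≤ 1) :
    ‖∑ j ∈ Finset.Icc 1 n, z ^ j‖ ≤ n := by
  calc ‖∑ j ∈ Finset.Icc 1 n, z ^ j‖ ≤ ∑ j ∈ Finset.Icc 1 n, ‖z ^ j‖ := by
        exact norm_sum_le _ _
    _ ≤ ∑ j ∈ Finset.Icc 1 n, 1 := by
        refine Finset.sum_le_sum fun j _ => ?_
        rw [norm_pow]
        exact pow_le_one₀ (norm_nonneg z) hz
    _ = n := by simp

private lemma stmt15_Sfactor (n : ℕ) (z : ℂ) :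
    ∑ j ∈ Finset.Icc 1 n, z ^ j = z * ∑ i ∈ Finset.range n, z ^ i := by
  rw [← Finset.Ico_add_one_right_eq_Icc, Finset.sum_Ico_eq_sum_range, Finset.mul_sum]
  simp [pow_succ, pow_add, mul_comm]

private lemma stmt15_Sgeom (n : ℕ) (z : ℂ) (hz : ‖z‖ ≤ 1) :
    ‖∑ j ∈ Finset.Icc 1 n, z ^ j‖ * ‖1 - z‖ ≤ 2 := by
  rw [stmt15_Sfactor, norm_mul, mul_assoc]
  have h1 : ‖∑ i ∈ Finset.range n, z ^ i‖ * ‖1 - z‖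
      = ‖z ^ n - 1‖ := by
    rw [← norm_mul]
    rw [show (∑ i ∈ Finset.range n, z ^ i) * (1 - z)
        = -((∑ i ∈ Finset.range n, z ^ i) * (z - 1)) by ring,
      geom_sum_mul, norm_neg]
  rw [h1]
  have h2 : ‖z ^ n - 1‖ ≤ 2 := by
    calc ‖z ^ n - 1‖ ≤ ‖z ^ n‖ + ‖(1:ℂ)‖ := by
          exact (norm_sub_le _ _)
      _ ≤ 1 + 1 := by
          simp [norm_pow]
          exact pow_le_one₀ (norm_nonneg z) hz
      _ = 2 := by norm_num
  calc ‖z‖ * ‖z ^ n - 1‖ ≤ 1 * 2 :=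
        mul_le_mul hz h2 (norm_nonneg _) zero_le_one
    _ = 2 := by ring

private lemma stmt15_powsub (j : ℕ) (z : ℂ) (hz : ‖z‖ ≤ 1) :
    ‖z ^ j - 1‖ ≤ j * ‖z - 1‖ := by
  rw [← geom_sum_mul, norm_mul]
  have : ‖∑ i ∈ Finset.range j, z ^ i‖ ≤ j := by
    calc ‖∑ i ∈ Finset.range j, z ^ i‖ ≤ ∑ i ∈ Finset.range j, ‖z ^ i‖ :=
        norm_sum_le _ _
      _ ≤ ∑ i ∈ Finset.range j, 1 := Finset.sum_le_sum fun i _ => by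
          rw [norm_pow]; exact pow_le_one₀ (norm_nonneg z) hz
      _ = j := by simp
  exact mul_le_mul_of_nonneg_right this (norm_nonneg _)

private lemma stmt15_Slower (n : ℕ) (z : ℂ) (hz : ‖z‖ ≤ 1)
    (hd : 2 * (n : ℝ) * ‖1 - z‖ ≤ 1) :
    (n : ℝ) / 2 ≤ ‖∑ j ∈ Finset.Icc 1 n, z ^ j‖ := by
  have hsub : ‖(∑ j ∈ Finset.Icc 1 n, z ^ j) - n‖
      ≤ (n : ℝ) ^ 2 * ‖1 - z‖ := by
    have : (∑ j ∈ Finset.Icc 1 n, z ^ j) - (n : ℂ) = ∑ j ∈ Finset.Icc 1 n, (z ^ j - 1) := by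
      rw [Finset.sum_sub_distrib]
      simp [Nat.card_Icc]
    rw [this]
    calc ‖∑ j ∈ Finset.Icc 1 n, (z ^ j - 1)‖
        ≤ ∑ j ∈ Finset.Icc 1 n, ‖z ^ j - 1‖ := norm_sum_le _ _
      _ ≤ ∑ j ∈ Finset.Icc 1 n, (j : ℝ) * ‖z - 1‖ :=
          Finset.sum_le_sum fun j _ => stmt15_powsub j z hz
      _ ≤ ∑ j ∈ Finset.Icc 1 n, (n : ℝ) * ‖z - 1‖ := by
          refine Finset.sum_le_sum fun j hj => ?_
          have := (Finset.mem_Icc.mp hj).2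
          exact mul_le_mul_of_nonneg_right (by exact_mod_cast this) (norm_nonneg _)
      _ = (n : ℝ) ^ 2 * ‖z - 1‖ := by
          rw [Finset.sum_const, Nat.card_Icc]; push_cast; ring_nf
      _ = (n : ℝ) ^ 2 * ‖1 - z‖ := by
          rw [← norm_neg]; congr 1; ring
  have h1 : (n : ℝ) ^ 2 * ‖1 - z‖ ≤ (n : ℝ) / 2 := by
    have hn : (0 : ℝ) ≤ n := Nat.cast_nonneg n
    nlinarith [norm_nonneg (1 - z)]
  have h2 : (n : ℝ) - ‖(∑ j ∈ Finset.Icc 1 n, z ^ j) - n‖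
      ≤ ‖∑ j ∈ Finset.Icc 1 n, z ^ j‖ := by
    have h4 := norm_sub_norm_le ((n : ℂ)) ((n : ℂ) - ∑ j ∈ Finset.Icc 1 n, z ^ j)
    simp only [sub_sub_cancel] at h4
    have h5 : ‖(n:ℂ) - ∑ j ∈ Finset.Icc 1 n, z ^ j‖
        = ‖(∑ j ∈ Finset.Icc 1 n, z ^ j) - n‖ := by
      rw [← norm_neg]; congr 1; ring
    have h3 : ‖(n : ℂ)‖ = (n : ℝ) := by simp
    rw [h5, h3] at h4
    exact h4
  linarith

private lemma stmt15_real_sum_bound (d : ℝ) (hd : 0 < d) (n : ℕ) :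
    ∑ k ∈ Finset.range n, min 1 ((4 / d ^ 2) / ((k : ℝ) + 1) ^ 2) ≤ 8 / d := by
  set s : ℝ := 2 / d with hs
  have hspos : 0 < s := by positivity
  set C : ℝ := 4 / d ^ 2 with hC
  have hCs : s ^ 2 = C := by rw [hs, hC]; ring
  have hCpos : 0 < C := by positivity
  have key : ∀ k : ℕ, min 1 (C / ((k : ℝ) + 1) ^ 2)
      ≤ 4 * C * (1 / ((k : ℝ) + s) - 1 / (((k + 1) : ℕ) + s)) := by
    intro k
    have hk0 : (0:ℝ) ≤ (k:ℝ) := Nat.cast_nonneg k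
    have h1 : (0:ℝ) < (k : ℝ) + s := by linarith
    have h2 : (0:ℝ) < ((k:ℝ) + 1) + s := by linarith
    have hdiff : 1 / ((k : ℝ) + s) - 1 / (((k + 1) : ℕ) + s)
        = 1 / (((k:ℝ) + s) * (((k:ℝ) + 1) + s)) := by
      push_cast
      field_simp
      ring
    rw [hdiff]
    have hprod : ((k:ℝ) + s) * (((k:ℝ) + 1) + s) ≤ 2 * (((k:ℝ)+1)^2 + C) := by
      nlinarith [sq_nonneg (s - (2*(k:ℝ)+1)/2), hCs, hk0]
    rcases le_or_gt (((k:ℝ)+1)^2) C with hcase | hcase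
    · have : min 1 (C / ((k : ℝ) + 1) ^ 2) ≤ 1 := min_le_left _ _
      refine this.trans ?_
      rw [mul_one_div]
      rw [le_div_iff₀ (by positivity)]
      nlinarith
    · have hmin : min 1 (C / ((k : ℝ) + 1) ^ 2) ≤ C / ((k:ℝ)+1)^2 := min_le_right _ _
      refine hmin.trans ?_
      rw [mul_one_div, div_le_div_iff₀ (by positivity) (by positivity)]
      nlinarith
  calc ∑ k ∈ Finset.range n, min 1 (C / ((k : ℝ) + 1) ^ 2)
      ≤ ∑ k ∈ Finset.range n, 4 * C * (1 / ((k : ℝ) + s) - 1 / (((k + 1) : ℕ) + s)) :=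
        Finset.sum_le_sum fun k _ => key k
    _ = 4 * C * (1 / ((0:ℕ) + s) - 1 / ((n:ℝ) + s)) := by
        rw [← Finset.mul_sum]
        congr 1
        exact Finset.sum_range_sub' (fun k : ℕ => 1 / ((k : ℝ) + s)) n
    _ ≤ 4 * C * (1 / s) := by
        have hn : (0:ℝ) < (n:ℝ) + s := by positivity
        have h6 : (0:ℝ) ≤ 1 / ((n:ℝ) + s) := by positivity
        push_cast
        have : 1 / ((0:ℝ) + s) - 1 / ((n:ℝ) + s) ≤ 1 / s := by
          rw [zero_add]
          linarith [h6]
        nlinarith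
    _ = 8 / d := by rw [hC, hs]; field_simp; ring

private lemma stmt15_tsum_upper (z : ℂ) (hz : ‖z‖ ≤ 1) :
    ∑' k : ℕ, ENNReal.ofReal ((‖∑ j ∈ Finset.Icc 1 (k + 1), z ^ j‖) ^ 2) /
        ENNReal.ofReal (((k : ℝ) + 1) ^ 2)
      ≤ 8 * (ENNReal.ofReal (‖1 - z‖))⁻¹ := by
  set d : ℝ := ‖1 - z‖ with hd
  rcases eq_or_lt_of_le (norm_nonneg (1 - z)) with h0 | hdpos
  · rw [hd, ← h0]
    simp [ENNReal.mul_top]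
  · -- d > 0
    have hterm : ∀ k : ℕ,
        ENNReal.ofReal ((‖∑ j ∈ Finset.Icc 1 (k + 1), z ^ j‖) ^ 2) /
          ENNReal.ofReal (((k : ℝ) + 1) ^ 2)
        ≤ ENNReal.ofReal (min 1 ((4 / d ^ 2) / ((k : ℝ) + 1) ^ 2)) := by
      intro k
      set h : ℝ := (‖∑ j ∈ Finset.Icc 1 (k + 1), z ^ j‖) ^ 2 with hh
      set p : ℝ := ((k : ℝ) + 1) ^ 2 with hp
      have hppos : 0 < p := by positivity
      have hb1 : ENNReal.ofReal h / ENNReal.ofReal p ≤ 1 := by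
        apply ENNReal.div_le_of_le_mul
        rw [one_mul]
        apply ENNReal.ofReal_le_ofReal
        have := stmt15_Sbound (k + 1) z hz
        rw [hh, hp]
        have h2 : ((k + 1 : ℕ) : ℝ) = (k : ℝ) + 1 := by push_cast; ring
        nlinarith [norm_nonneg (∑ j ∈ Finset.Icc 1 (k + 1), z ^ j)]
      have hb2 : ENNReal.ofReal h / ENNReal.ofReal p
          ≤ ENNReal.ofReal ((4 / d ^ 2) / p) := by
        rw [ENNReal.ofReal_div_of_pos hppos]
        apply ENNReal.div_le_div_right
        apply ENNReal.ofReal_le_ofReal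
        have hg := stmt15_Sgeom (k + 1) z hz
        rw [hh, le_div_iff₀ (by positivity : (0:ℝ) < d ^ 2)]
        have hnn : 0 ≤ ‖∑ j ∈ Finset.Icc 1 (k + 1), z ^ j‖ * ‖1 - z‖ :=
          mul_nonneg (norm_nonneg _) (norm_nonneg _)
        rw [hd]
        nlinarith [hg, hnn]
      rcases le_total (1 : ℝ) ((4 / d ^ 2) / p) with hc | hc
      · rw [min_eq_left hc, ENNReal.ofReal_one]; exact hb1
      · rw [min_eq_right hc]; exact hb2
    calc ∑' k : ℕ, ENNReal.ofReal ((‖∑ j ∈ Finset.Icc 1 (k + 1), z ^ j‖) ^ 2) /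
          ENNReal.ofReal (((k : ℝ) + 1) ^ 2)
        ≤ ∑' k : ℕ, ENNReal.ofReal (min 1 ((4 / d ^ 2) / ((k : ℝ) + 1) ^ 2)) :=
          ENNReal.tsum_le_tsum hterm
      _ ≤ ENNReal.ofReal (8 / d) := by
          rw [ENNReal.tsum_eq_iSup_sum]
          apply iSup_le
          intro s
          obtain ⟨n, hn⟩ := s.exists_nat_subset_range
          rw [← ENNReal.ofReal_sum_of_nonneg (fun k _ => by positivity)]
          apply ENNReal.ofReal_le_ofReal
          calc ∑ k ∈ s, min 1 ((4 / d ^ 2) / ((k : ℝ) + 1) ^ 2)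
              ≤ ∑ k ∈ Finset.range n, min 1 ((4 / d ^ 2) / ((k : ℝ) + 1) ^ 2) :=
                Finset.sum_le_sum_of_subset_of_nonneg hn (fun k _ _ => by positivity)
            _ ≤ 8 / d := stmt15_real_sum_bound d hdpos n
      _ = 8 * (ENNReal.ofReal d)⁻¹ := by
          rw [div_eq_mul_inv, ENNReal.ofReal_mul (by norm_num),
            ENNReal.ofReal_inv_of_pos hdpos]
          congr 1
          norm_num

private lemma stmt15_tsum_lower (z : ℂ) (hz : ‖z‖ ≤ 1) :
    (ENNReal.ofReal (‖1 - z‖))⁻¹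
      ≤ 8 * (∑' k : ℕ, ENNReal.ofReal ((‖∑ j ∈ Finset.Icc 1 (k + 1), z ^ j‖) ^ 2) /
          ENNReal.ofReal (((k : ℝ) + 1) ^ 2)) + 2 := by
  set d : ℝ := ‖1 - z‖ with hd
  rcases eq_or_lt_of_le (norm_nonneg (1 - z)) with h0 | hdpos
  · -- z = 1
    have hz1 : z = 1 := by
      have h1 : ‖1 - z‖ = 0 := h0.symm
      have h2 : (1 : ℂ) = z := sub_eq_zero.mp (by simpa using h1)
      exact h2.symm
    subst hz1
    have hterm : ∀ k : ℕ,
        ENNReal.ofReal ((‖∑ j ∈ Finset.Icc 1 (k + 1), (1:ℂ) ^ j‖) ^ 2) /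
          ENNReal.ofReal (((k : ℝ) + 1) ^ 2) = 1 := by
      intro k
      have hs : (∑ j ∈ Finset.Icc 1 (k + 1), (1:ℂ) ^ j) = ((k + 1 : ℕ) : ℂ) := by
        simp [Nat.card_Icc]
      have h2 : ‖((k + 1 : ℕ) : ℂ)‖ = ((k:ℝ) + 1) := by
        rw [Complex.norm_natCast]; push_cast; ring
      rw [hs, h2]
      exact ENNReal.div_self (ne_of_gt (ENNReal.ofReal_pos.mpr (by positivity)))
        ENNReal.ofReal_ne_top
    rw [tsum_congr hterm]
    rw [ENNReal.tsum_const_eq_top_of_ne_zero one_ne_zero]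
    simp [ENNReal.mul_top]
  · have hLHS : (ENNReal.ofReal d)⁻¹ = ENNReal.ofReal (1 / d) := by
      rw [one_div, ENNReal.ofReal_inv_of_pos hdpos]
    set N : ℕ := ⌊1 / (2 * d)⌋₊ with hN
    have hterm : ∀ k ∈ Finset.range N, (4 : ℝ≥0∞)⁻¹
        ≤ ENNReal.ofReal ((‖∑ j ∈ Finset.Icc 1 (k + 1), z ^ j‖) ^ 2) /
          ENNReal.ofReal (((k : ℝ) + 1) ^ 2) := by
      intro k hk
      have hkN : (k : ℕ) + 1 ≤ N := Finset.mem_range.mp hk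
      have hle : ((k : ℝ) + 1) ≤ 1 / (2 * d) := by
        have h1 : ((k + 1 : ℕ) : ℝ) ≤ N := Nat.cast_le.mpr hkN
        have h2 : (N : ℝ) ≤ 1 / (2 * d) := Nat.floor_le (by positivity)
        push_cast at h1
        linarith
      have hcond : 2 * ((k + 1 : ℕ) : ℝ) * d ≤ 1 := by
        rw [le_div_iff₀ (by positivity)] at hle
        push_cast
        linarith
      have hS := stmt15_Slower (k + 1) z hz (by rwa [← hd])
      set p : ℝ := ((k : ℝ) + 1) ^ 2 with hp
      have hppos : (0:ℝ) < p := by positivity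
      rw [ENNReal.le_div_iff_mul_le (Or.inl (by simp [hppos])) (Or.inl ENNReal.ofReal_ne_top)]
      have h4 : (4 : ℝ≥0∞)⁻¹ = ENNReal.ofReal (4⁻¹ : ℝ) := by
        rw [ENNReal.ofReal_inv_of_pos (by norm_num)]
        norm_num
      rw [h4, ← ENNReal.ofReal_mul (by norm_num)]
      apply ENNReal.ofReal_le_ofReal
      have hc : ((k + 1 : ℕ) : ℝ) = (k : ℝ) + 1 := by push_cast; ring
      rw [hc] at hS
      rw [hp]
      nlinarith [hS, norm_nonneg (∑ j ∈ Finset.Icc 1 (k + 1), z ^ j)]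
    have hsum : (N : ℝ≥0∞) * 4⁻¹
        ≤ ∑' k : ℕ, ENNReal.ofReal ((‖∑ j ∈ Finset.Icc 1 (k + 1), z ^ j‖) ^ 2) /
          ENNReal.ofReal (((k : ℝ) + 1) ^ 2) := by
      calc (N : ℝ≥0∞) * 4⁻¹ = ∑ _k ∈ Finset.range N, (4 : ℝ≥0∞)⁻¹ := by
            rw [Finset.sum_const, Finset.card_range, nsmul_eq_mul]
        _ ≤ ∑ k ∈ Finset.range N,
              ENNReal.ofReal ((‖∑ j ∈ Finset.Icc 1 (k + 1), z ^ j‖) ^ 2) /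
              ENNReal.ofReal (((k : ℝ) + 1) ^ 2) := Finset.sum_le_sum hterm
        _ ≤ _ := ENNReal.sum_le_tsum _
    rw [hLHS]
    have hreal : (1 : ℝ) / d ≤ 2 * N + 2 := by
      have hfl := Nat.lt_floor_add_one (1 / (2 * d))
      rw [← hN] at hfl
      rw [div_le_iff₀ hdpos]
      rw [div_lt_iff₀ (by positivity)] at hfl
      nlinarith
    calc ENNReal.ofReal (1 / d) ≤ ENNReal.ofReal (2 * N + 2) := ENNReal.ofReal_le_ofReal hreal
      _ = 2 * (N : ℝ≥0∞) + 2 := by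
          rw [ENNReal.ofReal_add (by positivity) (by norm_num),
            ENNReal.ofReal_mul (by norm_num)]
          simp [ENNReal.ofReal_natCast]
      _ = 8 * ((N : ℝ≥0∞) * 4⁻¹) + 2 := by
          have h84 : (8 : ℝ≥0∞) * 4⁻¹ = 2 := by
            rw [show (8 : ℝ≥0∞) = 2 * 4 by norm_num, mul_assoc,
              ENNReal.mul_inv_cancel (by norm_num) (by norm_num), mul_one]
          congr 1
          rw [show (8 : ℝ≥0∞) * ((N : ℝ≥0∞) * 4⁻¹) = 8 * 4⁻¹ * N by ring, h84]
      _ ≤ _ := by gcongr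

end Aux

/-- for a normal Markov contraction `Q` with spectral measure `ρ` of `f`
on the closed unit disk, `∫ |1-z|⁻¹ dρ < ∞` if and only if
`∑_k k⁻² ∫ |z + ⋯ + z^k|² dρ < ∞` (i.e. `∑_k k⁻² ‖E(S_k|F_0)‖₂² < ∞`). -/
theorem stmt15
    {S : Type*} [MeasurableSpace S] (π : Measure S) [IsProbabilityMeasure π]
    (Q : Lp ℂ 2 π →L[ℂ] Lp ℂ 2 π) (hQnormal : IsStarNormal Q) (hQnorm : ‖Q‖ ≤ 1)
    (f : Lp ℂ 2 π) (hfcent : ∫ x, f x ∂π = 0)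
    (ρ : Measure ℂ) [IsFiniteMeasure ρ]
    (hsupp : ρ {z : ℂ | 1 < ‖z‖} = 0)
    (hspec : ∀ j k : ℕ,
      (inner ℂ f (((Q ^ j) * (ContinuousLinearMap.adjoint Q) ^ k) f) : ℂ)
        = ∫ z, z ^ j * (starRingEnd ℂ z) ^ k ∂ρ)
    (hnorm : ∀ k : ℕ, ‖∑ j ∈ Finset.Icc 1 k, (Q ^ j) f‖ ^ 2
        = ∫ z, (‖∑ j ∈ Finset.Icc 1 k, z ^ j‖) ^ 2 ∂ρ) :
    (∫⁻ z, (ENNReal.ofReal (‖1 - z‖))⁻¹ ∂ρ < ⊤) ↔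
      Summable (fun k : ℕ =>
        (∫ z, (‖∑ j ∈ Finset.Icc 1 (k + 1), z ^ j‖) ^ 2 ∂ρ)
          / ((k : ℝ) + 1) ^ 2) := by
  classical
  -- a.e. the point is in the closed unit disk
  have hae : ∀ᵐ z ∂ρ, ‖z‖ ≤ 1 := by
    rw [ae_iff]
    simpa only [not_le] using hsupp
  -- notation
  set F : ℕ → ℂ → ℝ≥0∞ := fun k z =>
    ENNReal.ofReal ((‖∑ j ∈ Finset.Icc 1 (k + 1), z ^ j‖) ^ 2) /
      ENNReal.ofReal (((k : ℝ) + 1) ^ 2) with hF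
  have hcont : ∀ k : ℕ, Continuous fun z : ℂ =>
      (‖∑ j ∈ Finset.Icc 1 (k + 1), z ^ j‖) ^ 2 := by
    intro k
    exact (continuous_norm.comp
      (continuous_finset_sum _ fun j _ => continuous_pow j)).pow 2
  have hFmeas : ∀ k : ℕ, Measurable (F k) := by
    intro k
    exact ((hcont k).measurable.ennreal_ofReal).div measurable_const
  have hint : ∀ k : ℕ, Integrable
      (fun z : ℂ => (‖∑ j ∈ Finset.Icc 1 (k + 1), z ^ j‖) ^ 2) ρ := by
    intro k
    refine Integrable.mono' (integrable_const (((k : ℝ) + 1) ^ 2))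
      (hcont k).aestronglyMeasurable ?_
    filter_upwards [hae] with z hz
    rw [Real.norm_eq_abs, abs_of_nonneg (by positivity)]
    have := stmt15_Sbound (k + 1) z hz
    have h2 : ((k + 1 : ℕ) : ℝ) = (k : ℝ) + 1 := by push_cast; ring
    nlinarith [norm_nonneg (∑ j ∈ Finset.Icc 1 (k + 1), z ^ j)]
  -- each real term corresponds to the lintegral of F k
  have hterm : ∀ k : ℕ,
      ENNReal.ofReal ((∫ z, (‖∑ j ∈ Finset.Icc 1 (k + 1), z ^ j‖) ^ 2 ∂ρ)
          / ((k : ℝ) + 1) ^ 2) = ∫⁻ z, F k z ∂ρ := by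
    intro k
    rw [ENNReal.ofReal_div_of_pos (by positivity),
      MeasureTheory.ofReal_integral_eq_lintegral_ofReal (hint k)
        (ae_of_all _ fun z => by positivity)]
    rw [hF]
    simp only [div_eq_mul_inv]
    rw [lintegral_mul_const _ ((hcont k).measurable.ennreal_ofReal)]
  -- Tonelli
  have hTon : ∑' k : ℕ, ∫⁻ z, F k z ∂ρ = ∫⁻ z, ∑' k : ℕ, F k z ∂ρ :=
    (lintegral_tsum fun k => (hFmeas k).aemeasurable).symm
  -- summability of the real series iff finiteness of the ENNReal sum
  have hnonneg : ∀ k : ℕ,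
      0 ≤ (∫ z, (‖∑ j ∈ Finset.Icc 1 (k + 1), z ^ j‖) ^ 2 ∂ρ)
        / ((k : ℝ) + 1) ^ 2 := fun k =>
    div_nonneg (integral_nonneg fun z => by positivity) (by positivity)
  have hSummIff : Summable (fun k : ℕ =>
      (∫ z, (‖∑ j ∈ Finset.Icc 1 (k + 1), z ^ j‖) ^ 2 ∂ρ)
        / ((k : ℝ) + 1) ^ 2) ↔ (∫⁻ z, ∑' k : ℕ, F k z ∂ρ) ≠ ⊤ := by
    rw [← hTon]
    set t : ℕ → ℝ := fun k =>
      (∫ z, (‖∑ j ∈ Finset.Icc 1 (k + 1), z ^ j‖) ^ 2 ∂ρ)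
        / ((k : ℝ) + 1) ^ 2 with ht
    have h1 : ∀ k, (((t k).toNNReal : ℝ≥0) : ℝ≥0∞) = ∫⁻ z, F k z ∂ρ := by
      intro k
      rw [← hterm k]
      rfl
    rw [tsum_congr fun k => (h1 k).symm, ENNReal.tsum_coe_ne_top_iff_summable]
    exact (summable_congr fun k =>
      (Real.coe_toNNReal _ (hnonneg k)).symm).trans NNReal.summable_coe
  rw [hSummIff]
  -- measurability of the inverse distance
  have hinvmeas : Measurable fun z : ℂ => (ENNReal.ofReal (‖1 - z‖))⁻¹ :=
    ((continuous_norm.comp (continuous_const.sub continuous_id)).measurable.ennreal_ofReal).inv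
  constructor
  · -- integral finite → sum finite
    intro hI
    have hle : (∫⁻ z, ∑' k : ℕ, F k z ∂ρ)
        ≤ ∫⁻ z, 8 * (ENNReal.ofReal (‖1 - z‖))⁻¹ ∂ρ := by
      refine lintegral_mono_ae ?_
      filter_upwards [hae] with z hz
      exact stmt15_tsum_upper z hz
    rw [lintegral_const_mul' _ _ (by norm_num)] at hle
    exact ne_of_lt <| lt_of_le_of_lt hle <| ENNReal.mul_lt_top (by norm_num) hI
  · -- sum finite → integral finite
    intro hS
    have hle : (∫⁻ z, (ENNReal.ofReal (‖1 - z‖))⁻¹ ∂ρ)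
        ≤ ∫⁻ z, (8 * (∑' k : ℕ, F k z) + 2) ∂ρ := by
      refine lintegral_mono_ae ?_
      filter_upwards [hae] with z hz
      exact stmt15_tsum_lower z hz
    have hGmeas : Measurable fun z : ℂ => ∑' k : ℕ, F k z :=
      Measurable.ennreal_tsum hFmeas
    rw [lintegral_add_right _ measurable_const, lintegral_const,
      lintegral_const_mul' _ _ (by norm_num)] at hle
    refine lt_of_le_of_lt hle ?_
    apply ENNReal.add_lt_top.mpr
    constructor
    · exact ENNReal.mul_lt_top (by norm_num) (lt_top_iff_ne_top.mpr hS)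
    · exact ENNReal.mul_lt_top (by norm_num) (measure_lt_top ρ _)
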